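/- Let G be a subgroup of (ℂ,+). (i) Every λ-quiddity over G of size at least 5 that has some component equal to 0 is reducible. (ii) If 1 ∉ G, then every λ-quiddity over G of size 4 is irreducible. -/

import Mathlib

open Matrix Polynomial

noncomputable section

/-- The elementary matrix [[a, -1], [1, 0]]. -/
def matE (a : ℂ) : Matrix (Fin 2) (Fin 2) ℂ := !![a, -1; 1, 0]

/-- M_n(a_1, …, a_n) = matE a_n * matE a_{n-1} * ⋯ * matE a_1, for the list [a_1, …, a_n]. -/
def Mlist (l : List ℂ) : Matrix (Fin 2) (Fin 2) ℂ := (l.reverse.map matE).prod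

/-- A λ-quiddity over R : a nonempty tuple of elements of R with M_n(a_1,…,a_n) = ±Id. -/
def IsQuiddity (R : Set ℂ) (l : List ℂ) : Prop :=
  l ≠ [] ∧ (∀ x ∈ l, x ∈ R) ∧ (Mlist l = 1 ∨ Mlist l = -1)

/-- (a_1,…,a_n) ⊕ (b_1,…,b_m) := (a_1+b_m, a_2,…,a_{n-1}, a_n+b_1, b_2,…,b_{m-1}). -/
def oplus (a b : List ℂ) : List ℂ :=
  (a.headI + b.getLastD 0) ::
    (a.tail.dropLast ++ (a.getLastD 0 + b.headI) :: b.tail.dropLast)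

/-- b is obtained from a by a cyclic permutation of a or of the reversal of a. -/
def CyclicEquiv (a b : List ℂ) : Prop :=
  (∃ k, b = a.rotate k) ∨ (∃ k, b = a.reverse.rotate k)

/-- A λ-quiddity c over R is reducible if c ∼ (a_1,…,a_m) ⊕ (b_1,…,b_l) with
(a_1,…,a_m) a tuple of elements of R, (b_1,…,b_l) a λ-quiddity over R, m ≥ 3 and l ≥ 3. -/
def ReducibleQuiddity (R : Set ℂ) (c : List ℂ) : Prop :=
  ∃ a b : List ℂ, (∀ x ∈ a, x ∈ R) ∧ IsQuiddity R b ∧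
    3 ≤ a.length ∧ 3 ≤ b.length ∧ CyclicEquiv c (oplus a b)

/-- The irreducible λ-quiddities over R : the λ-quiddities of size ≥ 3 which are not
reducible (those of size < 3, i.e. (0,0), are by convention not irreducible). -/
def IrreducibleQuiddity (R : Set ℂ) (c : List ℂ) : Prop :=
  IsQuiddity R c ∧ 3 ≤ c.length ∧ ¬ ReducibleQuiddity R c

/-- The subgroup ⟨w⟩ = {kw : k ∈ ℤ} of (ℂ, +), as a set. -/
def subgroupGen (w : ℂ) : Set ℂ := {x | ∃ k : ℤ, x = (k : ℂ) * w}

end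

lemma Mlist_three (x y z : ℂ) :
    Mlist [x, y, z] = !![z*(x*y-1)-x, 1-z*y; x*y-1, -y] := by
  simp [Mlist, matE]
  refine ⟨⟨by ring, by ring⟩, by ring⟩

lemma Mlist_btt (t : ℂ) : Mlist [0, t, 0, -t] = 1 := by
  simp [Mlist, matE]
  ext i j
  fin_cases i <;> fin_cases j <;> simp [Matrix.mul_apply, Fin.sum_univ_succ]

theorem stmt19 (G : AddSubgroup ℂ) :
    (∀ c : List ℂ, IsQuiddity (G : Set ℂ) c → 5 ≤ c.length → (0 : ℂ) ∈ c →
      ReducibleQuiddity (G : Set ℂ) c) ∧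
    ((1 : ℂ) ∉ G → ∀ c : List ℂ, IsQuiddity (G : Set ℂ) c → c.length = 4 →
      IrreducibleQuiddity (G : Set ℂ) c) := by
  constructor
  · intro c hc h5 h0
    obtain ⟨hne, hmem, hM⟩ := hc
    obtain ⟨u, v, rfl⟩ := List.append_of_mem h0
    have hlen : 5 ≤ u.length + v.length + 1 := by have := h5; simp at this; omega
    have hdlen : 4 ≤ (v ++ u).length := by simp; omega
    have hdne : v ++ u ≠ [] := List.ne_nil_of_length_pos (by omega)
    obtain ⟨e, t, heq⟩ : ∃ e t, v ++ u = e ++ [t] :=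
      ⟨_, _, (List.dropLast_append_getLast hdne).symm⟩
    have helen : 3 ≤ e.length := by
      have := congrArg List.length heq; simp at this; omega
    obtain ⟨p, e', rfl⟩ : ∃ p e', e = p :: e' := by
      cases e with
      | nil => simp at helen
      | cons p e' => exact ⟨p, e', rfl⟩
    have hene : e' ≠ [] := by
      cases e' with
      | nil => simp at helen
      | cons _ _ => simp
    obtain ⟨m, q, rfl⟩ : ∃ m q, e' = m ++ [q] :=
      ⟨_, _, (List.dropLast_append_getLast hene).symm⟩
    have hin : ∀ x ∈ (p :: (m ++ [q])) ++ [t], x ∈ G := by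
      rw [← heq]
      intro x hx
      apply hmem
      simp at hx ⊢
      tauto
    have hp : p ∈ G := hin p (by simp)
    have ht : t ∈ G := hin t (by simp)
    have hq : q ∈ G := hin q (by simp)
    refine ⟨(p + t) :: (m ++ [q]), [0, t, 0, -t], ?_, ⟨by simp, ?_, Or.inl (Mlist_btt t)⟩,
      by simp at helen ⊢; omega, by simp, Or.inl ⟨u.length + 1, ?_⟩⟩
    · intro x hx
      simp at hx
      rcases hx with rfl | hx | rfl
      · exact G.add_mem hp ht
      · exact hin x (by simp [hx])
      · exact hq
    · intro x hx
      simp at hx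
      rcases hx with rfl | rfl | rfl | rfl
      · exact G.zero_mem
      · exact ht
      · exact G.zero_mem
      · exact G.neg_mem ht
    · have hc2 : u ++ 0 :: v = (u ++ [0]) ++ v := by simp
      rw [hc2, List.rotate_eq_drop_append_take (by simp)]
      rw [List.drop_left' (by simp), List.take_left' (by simp)]
      have : v ++ (u ++ [0]) = ((p :: (m ++ [q])) ++ [t]) ++ [0] := by
        rw [← heq]; simp
      rw [this]
      simp [oplus, List.getLastD_concat, List.dropLast_concat]
      rw [show (p + t) :: (m ++ [q]) = ((p + t) :: m) ++ [q] by simp, List.getLast?_concat]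
      rfl
  · intro h1 c hc hlen4
    refine ⟨hc, by omega, ?_⟩
    rintro ⟨a, b, haG, hbQ, ha3, hb3, hcyc⟩
    have hlen : c.length = (oplus a b).length := by
      rcases hcyc with ⟨k, hk⟩ | ⟨k, hk⟩ <;> rw [hk] <;> simp
    have holen : (oplus a b).length = a.tail.dropLast.length + b.tail.dropLast.length + 2 := by
      simp [oplus]; omega
    have hta : a.tail.dropLast.length = a.length - 2 := by simp; omega
    have htb : b.tail.dropLast.length = b.length - 2 := by simp; omega
    have hb : b.length = 3 := by omega
    obtain ⟨x, y, z, rfl⟩ := List.length_eq_three.mp hb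
    obtain ⟨-, hbG, hbM⟩ := hbQ
    have hy : y ∈ G := hbG y (by simp)
    rw [Mlist_three] at hbM
    rcases hbM with h | h
    · have := congr_fun (congr_fun h 1) 1
      simp at this
      have hy1 : y = -1 := by linear_combination -this
      subst hy1
      exact h1 (by simpa using G.neg_mem hy)
    · have := congr_fun (congr_fun h 1) 1
      simp at this
      subst this
      exact h1 hy
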